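/- Strong duality implies Ruttan direction: let w* ∈ ℝ^m, w* ≥ 0, Σⱼ wⱼ* = 1, and suppose d₂(w*) = η_∞² where η_∞ = e(ξ*) for an irreducible minimax approximant ξ* = p*/q* with q*(xⱼ) ≠ 0 for all j, and the infimum defining d₂(w*) is attained. Then the Hermitian matrix H_{w*} = A_{w*} − η_∞² B_{w*} = Σⱼ wⱼ* H(xⱼ) is positive semidefinite, and wⱼ* = 0 for every node xⱼ not in the reference set X_e(ξ*); hence H_{w*} = Σ over reference nodes of wⱼ* H(xⱼ), so Ruttan's sufficient condition holds. -/

import Mathlib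

open Polynomial

/-- The dual objective function `d₂(w)`. -/
noncomputable def d2 {m : ℕ} (n₁ n₂ : ℕ) (x f : Fin m → ℂ) (w : Fin m → ℝ) : ℝ :=
  sInf {s : ℝ | ∃ p q : Polynomial ℂ, p.natDegree ≤ n₁ ∧ q.natDegree ≤ n₂ ∧
    (∑ j, w j * ‖q.eval (x j)‖ ^ 2) = 1 ∧
    s = ∑ j, w j * ‖f j * q.eval (x j) - p.eval (x j)‖ ^ 2}

/-- Strong duality implies Ruttan direction: if `d₂(w*) = η∞²` is attained, then
`H_{w*} = A_{w*} − η∞² B_{w*}` is positive semidefinite (stated as nonnegativity of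
the quadratic form `Σⱼ wⱼ*|fⱼq(xⱼ)−p(xⱼ)|² − η∞² Σⱼ wⱼ*|q(xⱼ)|²`) and the weights
vanish off the reference set of `ξ* = p*/q*`, so Ruttan's condition holds. -/
theorem stmt14 {m : ℕ} (n₁ n₂ : ℕ) (hm : n₁ + n₂ + 2 ≤ m) (x : Fin m → ℂ)
    (hx : Function.Injective x) (f : Fin m → ℂ)
    (pstar qstar : Polynomial ℂ) (hp : pstar.natDegree ≤ n₁)
    (hq : qstar.natDegree ≤ n₂) (hq0 : ∀ j, qstar.eval (x j) ≠ 0)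
    (hcop : IsCoprime pstar qstar) (η : ℝ)
    (hub : ∀ j, ‖f j - pstar.eval (x j) / qstar.eval (x j)‖ ≤ η)
    (hatt : ∃ j, ‖f j - pstar.eval (x j) / qstar.eval (x j)‖ = η)
    (hmin : ∀ p' q' : Polynomial ℂ, p'.natDegree ≤ n₁ → q'.natDegree ≤ n₂ →
      (∀ j, q'.eval (x j) ≠ 0) →
      ∃ j, η ≤ ‖f j - p'.eval (x j) / q'.eval (x j)‖)
    (w : Fin m → ℝ) (hw0 : ∀ j, 0 ≤ w j) (hw1 : ∑ j, w j = 1)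
    (hsd : d2 n₁ n₂ x f w = η ^ 2)
    (hattain : ∃ p₀ q₀ : Polynomial ℂ, p₀.natDegree ≤ n₁ ∧ q₀.natDegree ≤ n₂ ∧
      (∑ j, w j * ‖q₀.eval (x j)‖ ^ 2) = 1 ∧
      (∑ j, w j * ‖f j * q₀.eval (x j) - p₀.eval (x j)‖ ^ 2) =
        d2 n₁ n₂ x f w) :
    (∀ p q : Polynomial ℂ, p.natDegree ≤ n₁ → q.natDegree ≤ n₂ →
      0 ≤ (∑ j, w j * ‖f j * q.eval (x j) - p.eval (x j)‖ ^ 2) -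
        η ^ 2 * ∑ j, w j * ‖q.eval (x j)‖ ^ 2) ∧
    ∀ j, ‖f j - pstar.eval (x j) / qstar.eval (x j)‖ ≠ η → w j = 0 := by
  have habsnn : ∀ z : ℂ, (0:ℝ) ≤ ‖z‖ := fun z => norm_nonneg z
  have hbdd : BddBelow {s : ℝ | ∃ p q : Polynomial ℂ, p.natDegree ≤ n₁ ∧ q.natDegree ≤ n₂ ∧
      (∑ j, w j * ‖q.eval (x j)‖ ^ 2) = 1 ∧
      s = ∑ j, w j * ‖f j * q.eval (x j) - p.eval (x j)‖ ^ 2} := by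
    refine ⟨0, ?_⟩
    rintro s ⟨p, q, -, -, -, rfl⟩
    exact Finset.sum_nonneg fun j _ => mul_nonneg (hw0 j) (by positivity)
  have hle : ∀ p q : Polynomial ℂ, p.natDegree ≤ n₁ → q.natDegree ≤ n₂ →
      (∑ j, w j * ‖q.eval (x j)‖ ^ 2) = 1 →
      η ^ 2 ≤ ∑ j, w j * ‖f j * q.eval (x j) - p.eval (x j)‖ ^ 2 := by
    intro p q h1 h2 h3
    rw [← hsd]
    exact csInf_le hbdd ⟨p, q, h1, h2, h3, rfl⟩
  have key : ∀ p q : Polynomial ℂ, p.natDegree ≤ n₁ → q.natDegree ≤ n₂ →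
      η ^ 2 * (∑ j, w j * ‖q.eval (x j)‖ ^ 2) ≤
      ∑ j, w j * ‖f j * q.eval (x j) - p.eval (x j)‖ ^ 2 := by
    intro p q h1 h2
    set S := ∑ j, w j * ‖q.eval (x j)‖ ^ 2 with hSdef
    have hS0 : 0 ≤ S := Finset.sum_nonneg fun j _ => mul_nonneg (hw0 j) (by positivity)
    rcases eq_or_lt_of_le hS0 with hS | hS
    · rw [← hS, mul_zero]
      exact Finset.sum_nonneg fun j _ => mul_nonneg (hw0 j) (by positivity)
    · have hSne : S ≠ 0 := ne_of_gt hS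
      set c : ℝ := Real.sqrt S with hcdef
      have hc2 : c ^ 2 = S := Real.sq_sqrt hS0
      have hc0 : 0 < c := Real.sqrt_pos.mpr hS
      set a : ℂ := ((c : ℂ))⁻¹ with hadef
      have ha2 : ‖a‖ ^ 2 = S⁻¹ := by
        rw [hadef, norm_inv, Complex.norm_real, Real.norm_eq_abs, abs_of_pos hc0, inv_pow, hc2]
      have hdeg1 : (Polynomial.C a * p).natDegree ≤ n₁ :=
        le_trans (Polynomial.natDegree_C_mul_le a p) h1
      have hdeg2 : (Polynomial.C a * q).natDegree ≤ n₂ :=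
        le_trans (Polynomial.natDegree_C_mul_le a q) h2
      have hcon : (∑ j, w j * ‖(Polynomial.C a * q).eval (x j)‖ ^ 2) = 1 := by
        have : ∀ j : Fin m, w j * ‖(Polynomial.C a * q).eval (x j)‖ ^ 2
            = S⁻¹ * (w j * ‖q.eval (x j)‖ ^ 2) := by
          intro j
          rw [Polynomial.eval_mul, Polynomial.eval_C, norm_mul, mul_pow, ha2]
          ring
        rw [Finset.sum_congr rfl fun j _ => this j, ← Finset.mul_sum, ← hSdef,
          inv_mul_cancel₀ hSne]
      have hval : (∑ j, w j * ‖f j * (Polynomial.C a * q).eval (x j) -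
            (Polynomial.C a * p).eval (x j)‖ ^ 2)
          = S⁻¹ * ∑ j, w j * ‖f j * q.eval (x j) - p.eval (x j)‖ ^ 2 := by
        rw [Finset.mul_sum]
        refine Finset.sum_congr rfl fun j _ => ?_
        have : f j * (Polynomial.C a * q).eval (x j) - (Polynomial.C a * p).eval (x j)
            = a * (f j * q.eval (x j) - p.eval (x j)) := by
          simp [Polynomial.eval_mul, Polynomial.eval_C]; ring
        rw [this, norm_mul, mul_pow, ha2]
        ring
      have := hle _ _ hdeg1 hdeg2 hcon
      rw [hval] at this
      calc η ^ 2 * S ≤ (S⁻¹ * ∑ j, w j * ‖f j * q.eval (x j) - p.eval (x j)‖ ^ 2) * S :=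
            mul_le_mul_of_nonneg_right this hS0
        _ = ∑ j, w j * ‖f j * q.eval (x j) - p.eval (x j)‖ ^ 2 := by
            field_simp
  constructor
  · intro p q h1 h2
    have := key p q h1 h2
    linarith
  · intro j hne
    by_contra hwj
    have hwj' : 0 < w j := lt_of_le_of_ne (hw0 j) (Ne.symm hwj)
    have hη0 : 0 ≤ η := by
      obtain ⟨k, hk⟩ := hatt
      rw [← hk]; exact habsnn _
    have hlt : ‖f j - pstar.eval (x j) / qstar.eval (x j)‖ < η :=
      lt_of_le_of_ne (hub j) hne
    have hrw : ∀ i : Fin m, f i * qstar.eval (x i) - pstar.eval (x i)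
        = (f i - pstar.eval (x i) / qstar.eval (x i)) * qstar.eval (x i) := by
      intro i; rw [sub_mul, div_mul_cancel₀ _ (hq0 i)]
    have hpt : ∀ i : Fin m, w i * ‖f i * qstar.eval (x i) - pstar.eval (x i)‖ ^ 2
        ≤ w i * (η ^ 2 * ‖qstar.eval (x i)‖ ^ 2) := by
      intro i
      rw [hrw i, norm_mul, mul_pow]
      refine mul_le_mul_of_nonneg_left ?_ (hw0 i)
      refine mul_le_mul_of_nonneg_right ?_ (by positivity)
      exact pow_le_pow_left₀ (habsnn _) (hub i) 2
    have hst : w j * ‖f j * qstar.eval (x j) - pstar.eval (x j)‖ ^ 2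
        < w j * (η ^ 2 * ‖qstar.eval (x j)‖ ^ 2) := by
      rw [hrw j, norm_mul, mul_pow]
      refine mul_lt_mul_of_pos_left ?_ hwj'
      refine mul_lt_mul_of_pos_right ?_ ?_
      · exact pow_lt_pow_left₀ hlt (habsnn _) (by norm_num)
      · have := hq0 j
        have h0 : 0 < ‖qstar.eval (x j)‖ := by
          simpa [norm_pos_iff] using this
        positivity
    have hsum : (∑ i, w i * ‖f i * qstar.eval (x i) - pstar.eval (x i)‖ ^ 2)
        < ∑ i, w i * (η ^ 2 * ‖qstar.eval (x i)‖ ^ 2) := by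
      refine Finset.sum_lt_sum (fun i _ => hpt i) ⟨j, Finset.mem_univ j, hst⟩
    have hk := key pstar qstar hp hq
    rw [Finset.mul_sum] at hk
    have : ∀ i : Fin m, η ^ 2 * (w i * ‖qstar.eval (x i)‖ ^ 2)
        = w i * (η ^ 2 * ‖qstar.eval (x i)‖ ^ 2) := fun i => by ring
    rw [Finset.sum_congr rfl fun i _ => this i] at hk
    linarith
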